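/- The conditional excluded middle instance ◯(y/x) ∨ ◯(¬y/x) is valid in every preference model whose preference relation is total and antisymmetric, but it is falsified in some finite preference model with a transitive and total (non-antisymmetric) preference relation; hence ◯(y/x) ∨ ◯(¬y/x) is not a theorem of Åqvist's logic G. -/

import Mathlib

/-- Formulas of Åqvist's dyadic deontic language. -/
inductive PForm (V : Type) : Type
  | var : V → PForm V
  | neg : PForm V → PForm V
  | conj : PForm V → PForm V → PForm V
  | box : PForm V → PForm V
  | ob : PForm V → PForm V → PForm V   -- `ob γ α` is ◯(γ/α)

/-- Strict version of a binary relation: `a ≻ b` iff `a ⪰ b` and `¬ b ⪰ a`. -/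
def strictRel {W : Type} (r : W → W → Prop) (a b : W) : Prop := r a b ∧ ¬ r b a

/-- ≻-maximal elements of a set `U`. -/
def maxSet {W : Type} (r : W → W → Prop) (U : Set W) : Set W :=
  {v | v ∈ U ∧ ¬ ∃ u ∈ U, strictRel r u v}

/-- A preference model. -/
structure PrefModel (V : Type) : Type 1 where
  W : Type
  rel : W → W → Prop
  val : V → Set W

/-- Truth set of a formula in a preference model. -/
def truthSet {V : Type} (M : PrefModel V) : PForm V → Set M.W
  | .var x => M.val x
  | .neg ψ => (truthSet M ψ)ᶜ
  | .conj ψ₁ ψ₂ => truthSet M ψ₁ ∩ truthSet M ψ₂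
  | .box β => {_w | truthSet M β = Set.univ}
  | .ob γ α => {_w | maxSet M.rel (truthSet M α) ⊆ truthSet M γ}

/-- A model validates a formula when it is true at all worlds. -/
def valid {V : Type} (M : PrefModel V) (φ : PForm V) : Prop :=
  truthSet M φ = Set.univ

/-- Limitedness of a preference model. -/
def Limited {V : Type} (M : PrefModel V) : Prop :=
  ∀ α : PForm V, (truthSet M α).Nonempty → (maxSet M.rel (truthSet M α)).Nonempty

/-- Smoothness of a preference model. -/
def SmoothModel {V : Type} (M : PrefModel V) : Prop :=
  ∀ (α : PForm V) (w : M.W), w ∈ truthSet M α →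
    ∃ u ∈ maxSet M.rel (truthSet M α), u = w ∨ strictRel M.rel u w

/-- Subformulas of a formula (including the formula itself). -/
def Subf {V : Type} : PForm V → Set (PForm V)
  | .var x => {.var x}
  | .neg ψ => insert (.neg ψ) (Subf ψ)
  | .conj ψ₁ ψ₂ => insert (.conj ψ₁ ψ₂) (Subf ψ₁ ∪ Subf ψ₂)
  | .box β => insert (.box β) (Subf β)
  | .ob γ α => insert (.ob γ α) (Subf γ ∪ Subf α)

/-- Disjunction, defined classically from ¬ and ∧. -/
def por {V : Type} (φ ψ : PForm V) : PForm V :=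
  PForm.neg (PForm.conj (PForm.neg φ) (PForm.neg ψ))

/-- The conditional excluded middle instance ◯(y/x) ∨ ◯(¬y/x). -/
def cem {V : Type} (x y : V) : PForm V :=
  por (PForm.ob (PForm.var y) (PForm.var x))
      (PForm.ob (PForm.neg (PForm.var y)) (PForm.var x))


/-- Countermodel: two worlds, universal relation. -/
def cM {V : Type} (y : V) : PrefModel V :=
  { W := Bool, rel := fun _ _ => True, val := fun v => {w | v = y → w = true} }

lemma cM_max {V : Type} (y : V) (U : Set (cM y).W) : maxSet (cM y).rel U = U := by
  ext v
  exact ⟨fun h => h.1, fun h => ⟨h, fun ⟨_, _, _, h2⟩ => h2 trivial⟩⟩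

lemma cem_truth {V : Type} (M : PrefModel V) (x y : V) (w : M.W) :
    w ∈ truthSet M (cem x y) ↔
      (maxSet M.rel (truthSet M (.var x)) ⊆ truthSet M (.var y)) ∨
      (maxSet M.rel (truthSet M (.var x)) ⊆ (truthSet M (.var y))ᶜ) := by
  simp [cem, por, truthSet]
  tauto

/-- CEM is valid in all models with total antisymmetric preference, falsified in some
finite transitive total model, hence not a theorem of Åqvist's logic G. -/
theorem stmt11 {V : Type} (x y : V) (hxy : x ≠ y) :
    (∀ M : PrefModel V,
        (∀ a b : M.W, M.rel a b ∨ M.rel b a) →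
        (∀ a b : M.W, M.rel a b → M.rel b a → a = b) →
        valid M (cem x y)) ∧
    (∃ M : PrefModel V, Finite M.W ∧ Transitive M.rel ∧
        (∀ a b : M.W, M.rel a b ∨ M.rel b a) ∧ ¬ valid M (cem x y)) ∧
    ¬ (∀ M : PrefModel V, Transitive M.rel →
        (∀ a b : M.W, M.rel a b ∨ M.rel b a) → SmoothModel M →
        valid M (cem x y)) := by
  classical
  have hnv : ¬ valid (cM y) (cem x y) := by
    intro hv
    have hw : (true : (cM y).W) ∈ truthSet (cM y) (cem x y) := by
      rw [hv]; trivial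
    replace hw := (cem_truth (cM y) x y true).mp hw
    have hx : truthSet (cM y) (.var x) = Set.univ := by
      ext w; simp [truthSet, cM, hxy]
    have hy : truthSet (cM y) (.var y) = {w | w = true} := by
      ext w; simp [truthSet, cM]
    rw [cM_max, hx, hy] at hw
    rcases hw with h | h
    · have := h (Set.mem_univ false); exact Bool.false_ne_true this
    · have := h (Set.mem_univ true); exact this rfl
  have part2 : ∃ M : PrefModel V, Finite M.W ∧ Transitive M.rel ∧
      (∀ a b : M.W, M.rel a b ∨ M.rel b a) ∧ ¬ valid M (cem x y) := by
    exact ⟨cM y, inferInstanceAs (Finite Bool), fun _ _ _ _ _ => trivial,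
      fun _ _ => Or.inl trivial, hnv⟩
  refine ⟨?_, part2, ?_⟩
  · intro M htot hanti
    have key : ∀ w : M.W, w ∈ truthSet M (cem x y) := by
      intro w
      rw [cem_truth]
      by_cases hne : (maxSet M.rel (truthSet M (.var x))).Nonempty
      · obtain ⟨m, hm⟩ := hne
        have huniq : ∀ v ∈ maxSet M.rel (truthSet M (.var x)), v = m := by
          intro v hv
          by_contra hvm
          rcases htot v m with h | h
          · exact hm.2 ⟨v, hv.1, h, fun h' => hvm (hanti v m h h')⟩
          · exact hv.2 ⟨m, hm.1, h, fun h' => hvm ((hanti m v h h').symm)⟩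
        by_cases hmy : m ∈ truthSet M (.var y)
        · exact Or.inl (fun v hv => (huniq v hv) ▸ hmy)
        · exact Or.inr (fun v hv => (huniq v hv) ▸ hmy)
      · exact Or.inl (fun v hv => absurd ⟨v, hv⟩ hne)
    exact Set.eq_univ_of_forall key
  · intro hall
    refine hnv (hall (cM y) (fun _ _ _ _ _ => trivial) (fun _ _ => Or.inl trivial) ?_)
    intro α w hw
    exact ⟨w, by rw [cM_max]; exact hw, Or.inl rfl⟩
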